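/- For every M > 10, the iceline-temperature function h(η) = T*(η)(η) - T_c has exactly two roots in the unit interval: there exist η₁, η₂ with 0 < η₁ < η₂ < 1 such that h(η₁) = h(η₂) = 0, h(η) > 0 for all η ∈ (η₁, η₂), and h(η) < 0 for all η ∈ [0, η₁) ∪ (η₂, 1]. -/

import Mathlib

noncomputable section

open scoped BoundedContinuousFunction

namespace Budyko

/-- Solar constant (W/m²). -/
def Q : ℝ := 343
/-- OLR constant A (W/m²). -/
def A : ℝ := 202
/-- OLR constant B (W/m²/°C). -/
def B : ℝ := 1.9
/-- Transport constant C (W/m²/°C). -/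
def C : ℝ := 3.04
/-- Critical temperature (°C). -/
def Tc : ℝ := -10

/-- Insolation distribution. -/
def s (y : ℝ) : ℝ := 1 - 0.241 * (3 * y ^ 2 - 1)

/-- Clamp to `[0,1]`. -/
def clamp (y : ℝ) : ℝ := min (max y 0) 1

/-- Insolation extended to the real line. -/
def sTilde (y : ℝ) : ℝ := s (clamp y)

/-- Iceline-dependent smooth albedo with steepness `M`. -/
def albedo (M η y : ℝ) : ℝ := 0.47 + 0.15 * Real.tanh (M * (clamp y - η))

/-- The Budyko vector field `F(T,η)(y)`. -/
def F (M : ℝ) (T : ℝ →ᵇ ℝ) (η y : ℝ) : ℝ :=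
  Q * sTilde y * (1 - albedo M η y) - (B + C) * T y - A + C * ∫ u in (0:ℝ)..1, T u

/-- `g(η) = ∫₀¹ Q s(y) (1 - a(η)(y)) dy`. -/
def g (M η : ℝ) : ℝ := ∫ y in (0:ℝ)..1, Q * s y * (1 - albedo M η y)

/-- The local equilibrium temperature profile `T*(η)(y)`. -/
def Tstar (M η y : ℝ) : ℝ :=
  (Q * sTilde y * (1 - albedo M η y) - A + (C / B) * (g M η - A)) / (B + C)

/-- Membership in the class `G_L` of Lipschitz graphs. -/
def MemGL (L : ℝ) (Φ : ℝ → ℝ →ᵇ ℝ) : Prop :=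
  ∀ ζ η : ℝ, ‖Φ ζ - Φ η‖ ≤ L * |ζ - η|

/-- A graph is `r`-admissible if `‖Φ‖_G ≤ r` and every `Φ(η)` is `r`-Lipschitz. -/
def Admissible (r : ℝ) (Φ : ℝ → ℝ →ᵇ ℝ) : Prop :=
  (∀ η : ℝ, ‖Φ η‖ ≤ r) ∧ ∀ η x z : ℝ, |Φ η x - Φ η z| ≤ r * |x - z|

/-- `Ψ` is a graph-transform image of `Φ` (time step `t`, slow parameter `ε`). -/
def IsGTImage (M t ε : ℝ) (Φ Ψ : ℝ → ℝ →ᵇ ℝ) : Prop :=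
  ∀ η ξ : ℝ, η = ξ + ε * t * (Φ ξ ξ - Tc) → ∀ y : ℝ, Ψ η y = Φ ξ y + t * F M (Φ ξ) ξ y

/-- `Φ` is a fixed point of the Budyko graph transform. -/
def IsGTFixed (M t ε : ℝ) (Φ : ℝ → ℝ →ᵇ ℝ) : Prop := IsGTImage M t ε Φ Φ

/-! ### Auxiliary development for the two-roots theorem -/


open intervalIntegral

/-! ### tanh / exp estimates -/

lemma continuous_tanh' : Continuous Real.tanh := by
  rw [show Real.tanh = fun x => Real.sinh x / Real.cosh x from funext Real.tanh_eq_sinh_div_cosh]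
  exact Real.continuous_sinh.div Real.continuous_cosh fun x => (Real.cosh_pos x).ne'

lemma contT (M : ℝ) : Continuous fun t : ℝ => Real.tanh (M * t) :=
  continuous_tanh'.comp (continuous_const.mul continuous_id)

lemma contT1 (M : ℝ) : Continuous fun t : ℝ => t * Real.tanh (M * t) :=
  continuous_id.mul (contT M)

lemma contT2 (M : ℝ) : Continuous fun t : ℝ => t ^ 2 * Real.tanh (M * t) :=
  (continuous_pow 2).mul (contT M)

lemma tanh_le_one (x : ℝ) : Real.tanh x ≤ 1 := by
  rw [Real.tanh_eq_sinh_div_cosh, div_le_one (Real.cosh_pos x)]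
  linarith [Real.cosh_sub_sinh x, Real.exp_pos (-x)]

lemma tanh_nonneg {x : ℝ} (hx : 0 ≤ x) : 0 ≤ Real.tanh x := by
  rw [Real.tanh_eq_sinh_div_cosh]
  apply div_nonneg _ (Real.cosh_pos x).le
  rw [Real.sinh_eq]
  have := Real.exp_le_exp.mpr (by linarith : -x ≤ x)
  linarith

lemma tanh_ge {x : ℝ} (hx : 0 ≤ x) : 1 - 2 * Real.exp (-(2 * x)) ≤ Real.tanh x := by
  rw [Real.tanh_eq_sinh_div_cosh, le_div_iff₀ (Real.cosh_pos x)]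
  have h1 : Real.cosh x - Real.sinh x = Real.exp (-x) := Real.cosh_sub_sinh x
  have h3 : Real.exp (-(2 * x)) * Real.exp x = Real.exp (-x) := by
    rw [← Real.exp_add]; congr 1; ring
  have h4 : Real.exp (-(2 * x)) * Real.exp (-x) = Real.exp (-(3 * x)) := by
    rw [← Real.exp_add]; congr 1; ring
  have h5 : Real.cosh x = (Real.exp x + Real.exp (-x)) / 2 := Real.cosh_eq x
  nlinarith [Real.exp_pos (-(3 * x)), Real.exp_pos (-x), Real.exp_pos x]

lemma sech_le {x : ℝ} (hx : 0 ≤ x) : 1 / Real.cosh x ^ 2 ≤ 4 * Real.exp (-(2 * x)) := by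
  have h1 : Real.exp x / 2 ≤ Real.cosh x := by
    rw [Real.cosh_eq]; nlinarith [Real.exp_pos (-x)]
  have h2 : (0:ℝ) < Real.cosh x := Real.cosh_pos x
  rw [div_le_iff₀ (by positivity)]
  have h3 : Real.exp (-(2 * x)) * (Real.exp x * Real.exp x) = 1 := by
    rw [← Real.exp_add, ← Real.exp_add, show -(2 * x) + (x + x) = 0 by ring, Real.exp_zero]
  nlinarith [mul_le_mul h1 h1 (by positivity) h2.le, Real.exp_pos (-(2 * x)), Real.exp_pos x]

lemma exp_one_ge : (2.7 : ℝ) ≤ Real.exp 1 := by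
  have := Real.exp_one_gt_d9; norm_num at this ⊢; linarith

lemma exp_four_ge : (53 : ℝ) ≤ Real.exp 4 := by
  have h4 : Real.exp 4 = Real.exp 1 * Real.exp 1 * Real.exp 1 * Real.exp 1 := by
    rw [← Real.exp_add, ← Real.exp_add, ← Real.exp_add]; norm_num
  have e1 := exp_one_ge
  have p1 := (Real.exp_pos 1).le
  have h2 : (2.7:ℝ) * 2.7 ≤ Real.exp 1 * Real.exp 1 := by nlinarith
  nlinarith [h2]

lemma exp_ten_ge : (20000 : ℝ) ≤ Real.exp 10 := by
  have h : Real.exp 10 = Real.exp 1 ^ 10 := by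
    rw [show (10:ℝ) = ((10:ℕ):ℝ) * 1 by norm_num, Real.exp_nat_mul]
  rw [h]
  calc (20000:ℝ) ≤ 2.7 ^ 10 := by norm_num
  _ ≤ Real.exp 1 ^ 10 := by
      apply pow_le_pow_left₀ (by norm_num) exp_one_ge

lemma ue_le {u : ℝ} (hu : 0 ≤ u) : u * Real.exp (-u) ≤ 1 / 2.7 := by
  have h1 : u ≤ Real.exp (u - 1) := by
    have := Real.add_one_le_exp (u - 1); linarith
  have h2 : Real.exp (u - 1) * Real.exp (-u) = Real.exp (-1) := by
    rw [← Real.exp_add]; congr 1; ring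
  have h3 : u * Real.exp (-u) ≤ Real.exp (u - 1) * Real.exp (-u) :=
    mul_le_mul_of_nonneg_right h1 (Real.exp_pos _).le
  have h4 : Real.exp (-1) ≤ 1 / 2.7 := by
    rw [Real.exp_neg, ← one_div]
    exact one_div_le_one_div_of_le (by norm_num) exp_one_ge
  linarith

lemma M_exp_le {M : ℝ} (hM : 10 < M) : M * Real.exp (-M) ≤ 1 / 2000 := by
  have h1 : M ≤ 10 * Real.exp (M - 10) := by
    have := Real.add_one_le_exp (M - 10); nlinarith
  have h2 : M * Real.exp (-M) ≤ 10 * Real.exp (M - 10) * Real.exp (-M) :=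
    mul_le_mul_of_nonneg_right h1 (Real.exp_pos _).le
  have h3 : Real.exp (M - 10) * Real.exp (-M) = Real.exp (-10) := by
    rw [← Real.exp_add]; congr 1; ring
  have h4 : Real.exp (-10) ≤ 1 / 20000 := by
    rw [Real.exp_neg, ← one_div]
    exact one_div_le_one_div_of_le (by norm_num) exp_ten_ge
  calc M * Real.exp (-M) ≤ 10 * (Real.exp (M - 10) * Real.exp (-M)) := by linarith [h2]
  _ = 10 * Real.exp (-10) := by rw [h3]
  _ ≤ 1 / 2000 := by linarith



/-! ### The antiderivatives G0, G1, G2 -/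

def G0 (M x : ℝ) : ℝ := ∫ t in (0:ℝ)..x, Real.tanh (M * t)
def G1 (M x : ℝ) : ℝ := ∫ t in (0:ℝ)..x, t * Real.tanh (M * t)
def G2 (M x : ℝ) : ℝ := ∫ t in (0:ℝ)..x, t ^ 2 * Real.tanh (M * t)

lemma hasDerivAt_G0 (M x : ℝ) : HasDerivAt (G0 M) (Real.tanh (M * x)) x :=
  intervalIntegral.integral_hasDerivAt_right ((contT M).intervalIntegrable _ _)
    ((contT M).stronglyMeasurableAtFilter _ _) (contT M).continuousAt

lemma hasDerivAt_G1 (M x : ℝ) : HasDerivAt (G1 M) (x * Real.tanh (M * x)) x :=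
  intervalIntegral.integral_hasDerivAt_right ((contT1 M).intervalIntegrable _ _)
    ((contT1 M).stronglyMeasurableAtFilter _ _) (contT1 M).continuousAt

lemma hasDerivAt_G2 (M x : ℝ) : HasDerivAt (G2 M) (x ^ 2 * Real.tanh (M * x)) x :=
  intervalIntegral.integral_hasDerivAt_right ((contT2 M).intervalIntegrable _ _)
    ((contT2 M).stronglyMeasurableAtFilter _ _) (contT2 M).continuousAt

lemma G0_zero (M : ℝ) : G0 M 0 = 0 := intervalIntegral.integral_same
lemma G1_zero (M : ℝ) : G1 M 0 = 0 := intervalIntegral.integral_same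
lemma G2_zero (M : ℝ) : G2 M 0 = 0 := intervalIntegral.integral_same

lemma G0_neg (M x : ℝ) : G0 M (-x) = G0 M x := by
  have h := intervalIntegral.integral_comp_neg (a := (0:ℝ)) (b := x)
    (fun t => Real.tanh (M * t))
  simp only [mul_neg, Real.tanh_neg, neg_zero] at h
  rw [intervalIntegral.integral_neg] at h
  have h2 : (∫ t in (-x)..(0:ℝ), Real.tanh (M * t))
      = -∫ t in (0:ℝ)..(-x), Real.tanh (M * t) := intervalIntegral.integral_symm 0 (-x)
  unfold G0
  linarith [h, h2]

lemma G1_neg (M x : ℝ) : G1 M (-x) = -G1 M x := by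
  have h := intervalIntegral.integral_comp_neg (a := (0:ℝ)) (b := x)
    (fun t => t * Real.tanh (M * t))
  simp only [mul_neg, Real.tanh_neg, neg_mul, mul_neg, neg_neg, neg_zero] at h
  have h2 : (∫ t in (-x)..(0:ℝ), t * Real.tanh (M * t))
      = -∫ t in (0:ℝ)..(-x), t * Real.tanh (M * t) := intervalIntegral.integral_symm 0 (-x)
  unfold G1
  linarith [h, h2]

lemma G2_neg (M x : ℝ) : G2 M (-x) = G2 M x := by
  have h := intervalIntegral.integral_comp_neg (a := (0:ℝ)) (b := x)
    (fun t => t ^ 2 * Real.tanh (M * t))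
  simp only [mul_neg, Real.tanh_neg, neg_sq, mul_neg, neg_zero] at h
  rw [intervalIntegral.integral_neg] at h
  have h2 : (∫ t in (-x)..(0:ℝ), t ^ 2 * Real.tanh (M * t))
      = -∫ t in (0:ℝ)..(-x), t ^ 2 * Real.tanh (M * t) := intervalIntegral.integral_symm 0 (-x)
  unfold G2
  linarith [h, h2]



/-! ### Bounds on G0, G1, G2 -/

lemma integral_exp_le {M x : ℝ} (hM : 0 < M) (hx : 0 ≤ x) :
    (∫ t in (0:ℝ)..x, Real.exp (-(2 * (M * t)))) ≤ 1 / (2 * M) := by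
  have hder : ∀ t ∈ Set.uIcc (0:ℝ) x,
      HasDerivAt (fun t => -(1 / (2 * M)) * Real.exp (-(2 * (M * t))))
        (Real.exp (-(2 * (M * t)))) t := by
    intro t _
    have h1 : HasDerivAt (fun t : ℝ => -(2 * (M * t))) (-(2 * M)) t := by
      have := ((hasDerivAt_id t).const_mul (2 * M)).fun_neg
      simpa [mul_assoc] using this
    have h2 := (h1.exp).const_mul (-(1 / (2 * M)))
    convert h2 using 1 <;> try with_reducible_and_instances rfl
    field_simp
  have hce : Continuous fun t : ℝ => Real.exp (-(2 * (M * t))) := by fun_prop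
  rw [intervalIntegral.integral_eq_sub_of_hasDerivAt hder (hce.intervalIntegrable _ _)]
  have h1 := Real.exp_pos (-(2 * (M * x)))
  have hc : (0:ℝ) < 1 / (2 * M) := by positivity
  simp only [mul_zero, neg_zero, Real.exp_zero, mul_one]
  nlinarith [h1, hc]

lemma G0_le (M : ℝ) {x : ℝ} (hx : 0 ≤ x) : G0 M x ≤ x := by
  have h : G0 M x ≤ ∫ t in (0:ℝ)..x, (1:ℝ) :=
    intervalIntegral.integral_mono_on hx ((contT M).intervalIntegrable _ _)
      (intervalIntegrable_const) (fun t _ => tanh_le_one _)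
  simpa using h

lemma G0_ge {M : ℝ} (hM : 10 < M) {x : ℝ} (hx : 0 ≤ x) : x - 1 / M ≤ G0 M x := by
  have hM0 : (0:ℝ) < M := by linarith
  have hc : Continuous fun t : ℝ => 1 - 2 * Real.exp (-(2 * (M * t))) := by fun_prop
  have h1 : (∫ t in (0:ℝ)..x, (1 - 2 * Real.exp (-(2 * (M * t))))) ≤ G0 M x := by
    apply intervalIntegral.integral_mono_on hx (hc.intervalIntegrable _ _)
      ((contT M).intervalIntegrable _ _)
    intro t ht
    exact tanh_ge (mul_nonneg hM0.le ht.1)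
  have h2 : (∫ t in (0:ℝ)..x, (1 - 2 * Real.exp (-(2 * (M * t)))))
      = x - 2 * ∫ t in (0:ℝ)..x, Real.exp (-(2 * (M * t))) := by
    have hce : Continuous fun t : ℝ => Real.exp (-(2 * (M * t))) := by fun_prop
    rw [intervalIntegral.integral_sub intervalIntegrable_const
      ((continuous_const.fun_mul hce).intervalIntegrable _ _),
      intervalIntegral.integral_const_mul]
    simp
  have h3 := integral_exp_le hM0 hx
  have h4 : 1 / M = 2 * (1 / (2 * M)) := by field_simp
  have h5 : 0 ≤ ∫ t in (0:ℝ)..x, Real.exp (-(2 * (M * t))) := by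
    apply intervalIntegral.integral_nonneg hx
    intro u _; positivity
  nlinarith [h1, h2, h3]

lemma t_tanh_ge {M t : ℝ} (hM : 10 < M) (ht : 0 ≤ t) :
    t - 1 / 27 ≤ t * Real.tanh (M * t) := by
  have hM0 : (0:ℝ) < M := by linarith
  have h1 : 1 - 2 * Real.exp (-(2 * (M * t))) ≤ Real.tanh (M * t) :=
    tanh_ge (mul_nonneg hM0.le ht)
  have h3 : (2 * (M * t)) * Real.exp (-(2 * (M * t))) ≤ 1 / 2.7 :=
    ue_le (by positivity)
  have hte : (0:ℝ) ≤ t * Real.exp (-(2 * (M * t))) := by positivity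
  have h2 : t * (2 * Real.exp (-(2 * (M * t)))) ≤ 1 / 27 := by nlinarith
  nlinarith [mul_le_mul_of_nonneg_left h1 ht]

lemma t2_tanh_ge {M t : ℝ} (hM : 10 < M) (ht : 0 ≤ t) (ht1 : t ≤ 1) :
    t ^ 2 - 1 / 27 ≤ t ^ 2 * Real.tanh (M * t) := by
  have hM0 : (0:ℝ) < M := by linarith
  have h1 : 1 - 2 * Real.exp (-(2 * (M * t))) ≤ Real.tanh (M * t) :=
    tanh_ge (mul_nonneg hM0.le ht)
  have h3 : (2 * (M * t)) * Real.exp (-(2 * (M * t))) ≤ 1 / 2.7 :=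
    ue_le (by positivity)
  have hte : (0:ℝ) ≤ t * Real.exp (-(2 * (M * t))) := by positivity
  have h2 : t * (2 * Real.exp (-(2 * (M * t)))) ≤ 1 / 27 := by nlinarith
  have h4 : t ^ 2 * (2 * Real.exp (-(2 * (M * t)))) ≤ 1 / 27 := by nlinarith
  nlinarith [mul_le_mul_of_nonneg_left h1 (sq_nonneg t)]

lemma G1_nonneg (M : ℝ) {x : ℝ} (hM : 0 < M) (hx : 0 ≤ x) : 0 ≤ G1 M x := by
  apply intervalIntegral.integral_nonneg hx
  intro u hu
  exact mul_nonneg hu.1 (tanh_nonneg (mul_nonneg hM.le hu.1))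

lemma G1_le (M : ℝ) {x : ℝ} (hx : 0 ≤ x) : G1 M x ≤ x ^ 2 / 2 := by
  have h : G1 M x ≤ ∫ t in (0:ℝ)..x, t := by
    apply intervalIntegral.integral_mono_on hx ((contT1 M).intervalIntegrable _ _)
      (continuous_id.intervalIntegrable _ _)
    intro t ht
    calc t * Real.tanh (M * t) ≤ t * 1 := mul_le_mul_of_nonneg_left (tanh_le_one _) ht.1
    _ = t := mul_one t
  rw [integral_id] at h
  nlinarith [h]

lemma G1_ge {M : ℝ} (hM : 10 < M) {x : ℝ} (hx : 0 ≤ x) :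
    x ^ 2 / 2 - x / 27 ≤ G1 M x := by
  have h : (∫ t in (0:ℝ)..x, (t - 1/27)) ≤ G1 M x := by
    have hid : Continuous fun t : ℝ => t - 1/27 := by fun_prop
    apply intervalIntegral.integral_mono_on hx (hid.intervalIntegrable _ _)
      ((contT1 M).intervalIntegrable _ _)
    intro t ht
    exact t_tanh_ge hM ht.1
  have h2 : (∫ t in (0:ℝ)..x, (t - 1/27)) = x ^ 2 / 2 - x / 27 := by
    have hid : Continuous fun t : ℝ => t := continuous_id
    rw [intervalIntegral.integral_sub (hid.intervalIntegrable _ _)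
      intervalIntegrable_const, integral_id, intervalIntegral.integral_const]
    simp; ring
  linarith

lemma G2_le (M : ℝ) {x : ℝ} (hx : 0 ≤ x) : G2 M x ≤ x ^ 3 / 3 := by
  have h : G2 M x ≤ ∫ t in (0:ℝ)..x, t ^ 2 := by
    apply intervalIntegral.integral_mono_on hx ((contT2 M).intervalIntegrable _ _)
      ((continuous_pow 2).intervalIntegrable _ _)
    intro t ht
    calc t ^ 2 * Real.tanh (M * t) ≤ t ^ 2 * 1 :=
        mul_le_mul_of_nonneg_left (tanh_le_one _) (sq_nonneg t)
    _ = t ^ 2 := mul_one _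
  rw [integral_pow] at h
  norm_num at h
  linarith

lemma G2_ge {M : ℝ} (hM : 10 < M) {x : ℝ} (hx : 0 ≤ x) (hx1 : x ≤ 1) :
    x ^ 3 / 3 - x / 27 ≤ G2 M x := by
  have h : (∫ t in (0:ℝ)..x, (t ^ 2 - 1/27)) ≤ G2 M x := by
    have hid : Continuous fun t : ℝ => t ^ 2 - 1/27 := by fun_prop
    apply intervalIntegral.integral_mono_on hx (hid.intervalIntegrable _ _)
      ((contT2 M).intervalIntegrable _ _)
    intro t ht
    exact t2_tanh_ge hM ht.1 (le_trans ht.2 hx1)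
  have h2 : (∫ t in (0:ℝ)..x, (t ^ 2 - 1/27)) = x ^ 3 / 3 - x / 27 := by
    rw [intervalIntegral.integral_sub ((continuous_pow 2).intervalIntegrable _ _)
      intervalIntegrable_const, integral_pow, intervalIntegral.integral_const]
    norm_num; ring
  linarith


/-! ### K-functions, J and the iceline function -/

def K0f (M η : ℝ) : ℝ := G0 M (1 - η) - G0 M (-η)
def K1f (M η : ℝ) : ℝ := G1 M (1 - η) - G1 M (-η)
def K2f (M η : ℝ) : ℝ := G2 M (1 - η) - G2 M (-η)

def Jfun (M η : ℝ) : ℝ := s η * K0f M η - 1.446 * η * K1f M η - 0.723 * K2f M η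

def Jp (M η : ℝ) : ℝ :=
  -(1.446 * (η * K0f M η + K1f M η)) - 0.518 * Real.tanh (M * (1 - η))
    - 1.241 * Real.tanh (M * η)

def Jpp (M η : ℝ) : ℝ :=
  -(1.446 * (K0f M η - Real.tanh (M * (1 - η))))
    + 0.518 * (M * (1 / Real.cosh (M * (1 - η)) ^ 2))
    - 1.241 * (M * (1 / Real.cosh (M * η) ^ 2))

def hfun (M η : ℝ) : ℝ :=
  (Q * s η * 0.53 - A + (C / B) * ((0.53 * Q - 0.15 * Q * Jfun M η) - A)) / (B + C) - Tc

def hp (M η : ℝ) : ℝ :=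
  (Q * (-(1.446 * η)) * 0.53 + (C / B) * (-(0.15 * Q) * Jp M η)) / (B + C)

def hpp (M η : ℝ) : ℝ :=
  (Q * (-1.446) * 0.53 + (C / B) * (-(0.15 * Q) * Jpp M η)) / (B + C)

/-! ### Identification of `Tstar` on the diagonal -/

lemma clamp_eq {y : ℝ} (h0 : 0 ≤ y) (h1 : y ≤ 1) : clamp y = y := by
  unfold clamp
  rw [max_eq_left h0, min_eq_left h1]

lemma integral_s : (∫ y in (0:ℝ)..1, s y) = 1 := by
  have h : ∀ y ∈ Set.uIcc (0:ℝ) 1,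
      HasDerivAt (fun y : ℝ => 1.241 * y - 0.241 * y ^ 3) (s y) y := by
    intro y _
    have H : HasDerivAt (fun y : ℝ => 1.241 * y - 0.241 * y ^ 3)
        (1.241 * 1 - 0.241 * (3 * y ^ 2)) y := by
      have h1 := ((hasDerivAt_id y).const_mul (1.241:ℝ))
      have h2 := ((hasDerivAt_pow 3 y).const_mul (0.241:ℝ))
      have := h1.fun_sub h2
      convert this using 1 <;> (try with_reducible_and_instances rfl) <;> norm_num
    convert H using 1
    unfold s; ring
  have hsc : Continuous s := by unfold s; fun_prop
  rw [intervalIntegral.integral_eq_sub_of_hasDerivAt h (hsc.intervalIntegrable _ _)]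
  norm_num

lemma g_eq (M η : ℝ) :
    g M η = 0.53 * Q - 0.15 * Q * ∫ y in (0:ℝ)..1, s y * Real.tanh (M * (y - η)) := by
  unfold g
  have h1 : Set.EqOn (fun y => Q * s y * (1 - albedo M η y))
      (fun y => 0.53 * Q * s y - 0.15 * Q * (s y * Real.tanh (M * (y - η))))
      (Set.uIcc (0:ℝ) 1) := by
    intro y hy
    rw [Set.uIcc_of_le (by norm_num : (0:ℝ) ≤ 1)] at hy
    have hc : clamp y = y := clamp_eq hy.1 hy.2
    simp only
    unfold albedo
    rw [hc]
    ring
  rw [intervalIntegral.integral_congr h1]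
  have hsc : Continuous s := by unfold s; fun_prop
  have hca : Continuous fun y : ℝ => s y * Real.tanh (M * (y - η)) := by
    apply hsc.mul (continuous_tanh'.comp (by fun_prop))
  rw [intervalIntegral.integral_sub
    ((continuous_const.fun_mul hsc).intervalIntegrable _ _)
    ((continuous_const.fun_mul hca).intervalIntegrable _ _),
    intervalIntegral.integral_const_mul, intervalIntegral.integral_const_mul, integral_s]
  ring

lemma Jint_rep (M η : ℝ) :
    (∫ y in (0:ℝ)..1, s y * Real.tanh (M * (y - η))) = Jfun M η := by
  have h1 : (fun y : ℝ => s y * Real.tanh (M * (y - η)))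
      = fun y : ℝ => (fun u => (s η - 1.446 * η * u - 0.723 * u ^ 2) * Real.tanh (M * u)) (y - η) := by
    funext y
    simp only
    have hs : s y = s η - 1.446 * η * (y - η) - 0.723 * (y - η) ^ 2 := by unfold s; ring
    rw [hs]
  rw [h1, intervalIntegral.integral_comp_sub_right
    (fun u => (s η - 1.446 * η * u - 0.723 * u ^ 2) * Real.tanh (M * u)) η]
  have h2 : ∀ u : ℝ, (s η - 1.446 * η * u - 0.723 * u ^ 2) * Real.tanh (M * u)
      = s η * Real.tanh (M * u) - 1.446 * η * (u * Real.tanh (M * u))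
        - 0.723 * (u ^ 2 * Real.tanh (M * u)) := fun u => by ring
  simp only [h2]
  rw [intervalIntegral.integral_sub (((continuous_const.fun_mul (contT M)).fun_sub
      (continuous_const.fun_mul (contT1 M))).intervalIntegrable _ _)
      ((continuous_const.fun_mul (contT2 M)).intervalIntegrable _ _),
    intervalIntegral.integral_sub ((continuous_const.fun_mul (contT M)).intervalIntegrable _ _)
      ((continuous_const.fun_mul (contT1 M)).intervalIntegrable _ _),
    intervalIntegral.integral_const_mul, intervalIntegral.integral_const_mul,
    intervalIntegral.integral_const_mul]
  have e0 : (∫ u in (0 - η)..(1 - η), Real.tanh (M * u)) = K0f M η := by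
    unfold K0f G0
    rw [zero_sub]
    exact (intervalIntegral.integral_interval_sub_left
      ((contT M).intervalIntegrable _ _) ((contT M).intervalIntegrable _ _)).symm
  have e1 : (∫ u in (0 - η)..(1 - η), u * Real.tanh (M * u)) = K1f M η := by
    unfold K1f G1
    rw [zero_sub]
    exact (intervalIntegral.integral_interval_sub_left
      ((contT1 M).intervalIntegrable _ _) ((contT1 M).intervalIntegrable _ _)).symm
  have e2 : (∫ u in (0 - η)..(1 - η), u ^ 2 * Real.tanh (M * u)) = K2f M η := by
    unfold K2f G2
    rw [zero_sub]
    exact (intervalIntegral.integral_interval_sub_left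
      ((contT2 M).intervalIntegrable _ _) ((contT2 M).intervalIntegrable _ _)).symm
  rw [e0, e1, e2]
  unfold Jfun
  ring

lemma hfun_eq (M : ℝ) {η : ℝ} (h0 : 0 ≤ η) (h1 : η ≤ 1) :
    Tstar M η η - Tc = hfun M η := by
  unfold Tstar sTilde albedo hfun
  rw [clamp_eq h0 h1, sub_self, mul_zero, Real.tanh_zero, g_eq, Jint_rep]
  norm_num


/-! ### Derivatives -/

lemma hasDerivAt_tanh (x : ℝ) : HasDerivAt Real.tanh (1 / Real.cosh x ^ 2) x := by
  have h := (Real.hasDerivAt_sinh x).fun_div (Real.hasDerivAt_cosh x) (Real.cosh_pos x).ne'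
  rw [show Real.tanh = fun x => Real.sinh x / Real.cosh x from funext Real.tanh_eq_sinh_div_cosh]
  convert h using 1 <;> try with_reducible_and_instances rfl
  have hc := Real.cosh_sq_sub_sinh_sq x
  rw [show Real.cosh x * Real.cosh x - Real.sinh x * Real.sinh x = 1 by nlinarith [hc]]

lemma hasDerivAt_T1 (M η : ℝ) :
    HasDerivAt (fun η : ℝ => Real.tanh (M * (1 - η)))
      (-(M * (1 / Real.cosh (M * (1 - η)) ^ 2))) η := by
  have hi : HasDerivAt (fun η : ℝ => M * (1 - η)) (-M) η := by
    have := ((hasDerivAt_id η).const_sub 1).const_mul M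
    convert this using 1 <;> (try rfl) <;> ring
  have h2 := (hasDerivAt_tanh (M * (1 - η))).comp η hi
  simp only [Function.comp_def] at h2
  convert h2 using 1 <;> try with_reducible_and_instances rfl
  ring

lemma hasDerivAt_T0 (M η : ℝ) :
    HasDerivAt (fun η : ℝ => Real.tanh (M * η))
      (M * (1 / Real.cosh (M * η) ^ 2)) η := by
  have hi : HasDerivAt (fun η : ℝ => M * η) M η := by
    simpa using (hasDerivAt_id η).const_mul M
  have h2 := (hasDerivAt_tanh (M * η)).comp η hi
  simp only [Function.comp_def] at h2
  convert h2 using 1 <;> try with_reducible_and_instances rfl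
  ring

lemma hasDerivAt_K0 (M η : ℝ) :
    HasDerivAt (K0f M) (-(Real.tanh (M * (1 - η)) + Real.tanh (M * η))) η := by
  have hia : HasDerivAt (fun η : ℝ => 1 - η) (-1) η := by
    simpa using (hasDerivAt_id η).const_sub 1
  have hib : HasDerivAt (fun η : ℝ => -η) (-1) η := by
    simpa using (hasDerivAt_id η).fun_neg
  have ha : HasDerivAt (fun η : ℝ => G0 M (1 - η)) (Real.tanh (M * (1 - η)) * (-1)) η := by
    have := (hasDerivAt_G0 M (1 - η)).comp η hia
    simpa [Function.comp_def] using this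
  have hb : HasDerivAt (fun η : ℝ => G0 M (-η)) (Real.tanh (M * (-η)) * (-1)) η := by
    have := (hasDerivAt_G0 M (-η)).comp η hib
    simpa [Function.comp_def] using this
  have H := ha.fun_sub hb
  have hK : K0f M = fun η => G0 M (1 - η) - G0 M (-η) := rfl
  rw [hK]
  convert H using 1 <;> try with_reducible_and_instances rfl
  simp only [mul_neg, Real.tanh_neg]
  ring

lemma hasDerivAt_K1 (M η : ℝ) :
    HasDerivAt (K1f M)
      (-((1 - η) * Real.tanh (M * (1 - η))) + η * Real.tanh (M * η)) η := by
  have hia : HasDerivAt (fun η : ℝ => 1 - η) (-1) η := by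
    simpa using (hasDerivAt_id η).const_sub 1
  have hib : HasDerivAt (fun η : ℝ => -η) (-1) η := by
    simpa using (hasDerivAt_id η).fun_neg
  have ha : HasDerivAt (fun η : ℝ => G1 M (1 - η))
      ((1 - η) * Real.tanh (M * (1 - η)) * (-1)) η := by
    have := (hasDerivAt_G1 M (1 - η)).comp η hia
    simpa [Function.comp_def] using this
  have hb : HasDerivAt (fun η : ℝ => G1 M (-η))
      (-η * Real.tanh (M * (-η)) * (-1)) η := by
    have := (hasDerivAt_G1 M (-η)).comp η hib
    simpa [Function.comp_def] using this
  have H := ha.fun_sub hb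
  have hK : K1f M = fun η => G1 M (1 - η) - G1 M (-η) := rfl
  rw [hK]
  convert H using 1 <;> try with_reducible_and_instances rfl
  simp only [mul_neg, Real.tanh_neg]
  ring

lemma hasDerivAt_K2 (M η : ℝ) :
    HasDerivAt (K2f M)
      (-((1 - η) ^ 2 * Real.tanh (M * (1 - η))) - η ^ 2 * Real.tanh (M * η)) η := by
  have hia : HasDerivAt (fun η : ℝ => 1 - η) (-1) η := by
    simpa using (hasDerivAt_id η).const_sub 1
  have hib : HasDerivAt (fun η : ℝ => -η) (-1) η := by
    simpa using (hasDerivAt_id η).fun_neg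
  have ha : HasDerivAt (fun η : ℝ => G2 M (1 - η))
      ((1 - η) ^ 2 * Real.tanh (M * (1 - η)) * (-1)) η := by
    have := (hasDerivAt_G2 M (1 - η)).comp η hia
    simpa [Function.comp_def] using this
  have hb : HasDerivAt (fun η : ℝ => G2 M (-η))
      ((-η) ^ 2 * Real.tanh (M * (-η)) * (-1)) η := by
    have := (hasDerivAt_G2 M (-η)).comp η hib
    simpa [Function.comp_def] using this
  have H := ha.fun_sub hb
  have hK : K2f M = fun η => G2 M (1 - η) - G2 M (-η) := rfl
  rw [hK]
  convert H using 1 <;> try with_reducible_and_instances rfl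
  simp only [mul_neg, Real.tanh_neg]
  ring

lemma hasDerivAt_s (η : ℝ) : HasDerivAt s (-(1.446 * η)) η := by
  have h1 := (((hasDerivAt_pow 2 η).const_mul (3:ℝ)).sub_const (1:ℝ)).const_mul (0.241:ℝ)
  have h2 := h1.const_sub (1:ℝ)
  have hs : s = fun y : ℝ => 1 - 0.241 * (3 * y ^ 2 - 1) := rfl
  rw [hs]
  convert h2 using 1 <;> try with_reducible_and_instances rfl
  norm_num; ring

lemma hasDerivAt_Jfun (M η : ℝ) : HasDerivAt (Jfun M) (Jp M η) η := by
  have h1 := (hasDerivAt_s η).fun_mul (hasDerivAt_K0 M η)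
  have h2 := (((hasDerivAt_id η).const_mul (1.446:ℝ)).fun_mul (hasDerivAt_K1 M η))
  have h3 := (hasDerivAt_K2 M η).const_mul (0.723:ℝ)
  have H := (h1.fun_sub h2).fun_sub h3
  have hJ : Jfun M = fun η => s η * K0f M η - 1.446 * η * K1f M η - 0.723 * K2f M η := rfl
  rw [hJ]
  convert H using 1 <;> try rfl
  simp only [Jp, s, id]
  ring

lemma hasDerivAt_hfun (M η : ℝ) : HasDerivAt (hfun M) (hp M η) η := by
  have h1 := ((hasDerivAt_s η).const_mul Q).mul_const (0.53:ℝ)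
  have h2 := (((hasDerivAt_Jfun M η).const_mul (0.15 * Q)).const_sub (0.53 * Q)).sub_const A
  have h3 := (h1.sub_const A).fun_add (h2.const_mul (C / B))
  have H := (h3.div_const (B + C)).sub_const Tc
  have hh : hfun M = fun η =>
      (Q * s η * 0.53 - A + C / B * (0.53 * Q - 0.15 * Q * Jfun M η - A)) / (B + C) - Tc := rfl
  rw [hh]
  convert H using 1 <;> try with_reducible_and_instances rfl
  simp only [hp]
  ring

lemma hasDerivAt_Jp (M η : ℝ) : HasDerivAt (Jp M) (Jpp M η) η := by
  have h1 := (hasDerivAt_id η).fun_mul (hasDerivAt_K0 M η)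
  have h2 := (h1.fun_add (hasDerivAt_K1 M η)).const_mul (1.446:ℝ)
  have H := (h2.fun_neg.fun_sub ((hasDerivAt_T1 M η).const_mul (0.518:ℝ))).fun_sub
    ((hasDerivAt_T0 M η).const_mul (1.241:ℝ))
  have hJ : Jp M = fun η => -(1.446 * (η * K0f M η + K1f M η))
      - 0.518 * Real.tanh (M * (1 - η)) - 1.241 * Real.tanh (M * η) := rfl
  rw [hJ]
  convert H using 1 <;> try rfl
  simp only [Jpp, id]
  ring

lemma hasDerivAt_hp (M η : ℝ) : HasDerivAt (hp M) (hpp M η) η := by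
  have h1 : HasDerivAt (fun y : ℝ => Q * (-(1.446 * y)) * 0.53) (Q * (-1.446) * 0.53) η := by
    have := (((hasDerivAt_id η).const_mul (1.446:ℝ)).fun_neg.const_mul Q).mul_const (0.53:ℝ)
    convert this using 1 <;> (try with_reducible_and_instances rfl) <;> norm_num
  have h2 := ((hasDerivAt_Jp M η).const_mul (-(0.15 * Q))).const_mul (C / B)
  have H := (h1.fun_add h2).div_const (B + C)
  have hh : hp M = fun η =>
      (Q * (-(1.446 * η)) * 0.53 + C / B * (-(0.15 * Q) * Jp M η)) / (B + C) := rfl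
  rw [hh]
  convert H using 1 <;> try rfl

lemma hfun_cont (M : ℝ) : Continuous (hfun M) := by
  have : Differentiable ℝ (hfun M) := fun x => (hasDerivAt_hfun M x).differentiableAt
  exact this.continuous

lemma deriv_hfun (M : ℝ) : deriv (hfun M) = hp M :=
  funext fun x => (hasDerivAt_hfun M x).deriv


/-! ### Sign estimates -/

lemma tanh_ge_53 {x : ℝ} (hx : 2 ≤ x) : 1 - 2 / 53 ≤ Real.tanh x := by
  have h := tanh_ge (by linarith : (0:ℝ) ≤ x)
  have h2 : Real.exp (-(2 * x)) ≤ Real.exp (-(4:ℝ)) := Real.exp_le_exp.mpr (by linarith)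
  have h3 : Real.exp (-(4:ℝ)) ≤ 1 / 53 := by
    rw [Real.exp_neg, ← one_div]
    exact one_div_le_one_div_of_le (by norm_num) exp_four_ge
  linarith

lemma Jp_lt {M : ℝ} (hM : 10 < M) {η : ℝ} (h0 : 0 < η) (h1 : η < 0.51) :
    Jp M η < -(3.19325 * η) := by
  have hM0 : (0:ℝ) < M := by linarith
  have h1η : (0:ℝ) ≤ 1 - η := by norm_num at h1 ⊢; linarith
  have hK0 : 0.9 - 2 * η ≤ K0f M η := by
    have ha := G0_ge hM h1η
    have hb := G0_le M h0.le
    have hMinv : 1 / M ≤ 1 / 10 := one_div_le_one_div_of_le (by norm_num) hM.le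
    unfold K0f
    rw [G0_neg]
    linarith
  have hK1 : ((1 - η) ^ 2 + η ^ 2) / 2 - 1 / 27 ≤ K1f M η := by
    have ha := G1_ge hM h1η
    have hb := G1_ge hM h0.le
    unfold K1f
    rw [G1_neg]
    nlinarith [ha, hb]
  have hT1 : 1 - 2 / 53 ≤ Real.tanh (M * (1 - η)) := by
    apply tanh_ge_53
    have := mul_le_mul_of_nonneg_right hM.le h1η
    norm_num at h1
    nlinarith
  have hK0' : η * (0.9 - 2 * η) ≤ η * K0f M η := mul_le_mul_of_nonneg_left hK0 h0.le
  rcases le_or_gt η 0.2 with hc | hc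
  · have hT0 : 0 ≤ Real.tanh (M * η) := tanh_nonneg (by positivity)
    have hsq : η * η ≤ η * 0.2 := mul_le_mul_of_nonneg_left hc h0.le
    unfold Jp
    nlinarith [hK0', hK1, hT1, hT0, hsq, h0]
  · have hT0 : 1 - 2 / 53 ≤ Real.tanh (M * η) := by
      apply tanh_ge_53
      have := mul_le_mul_of_nonneg_right hM.le h0.le
      nlinarith
    have hsq : η * η ≤ η * 0.51 := mul_le_mul_of_nonneg_left h1.le h0.le
    unfold Jp
    nlinarith [hK0', hK1, hT1, hT0, hsq, h0]

lemma hp_pos {M : ℝ} (hM : 10 < M) {η : ℝ} (h0 : 0 < η) (h1 : η < 0.51) : 0 < hp M η := by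
  have hJ := Jp_lt hM h0 h1
  have hnum : 0 < Q * (-(1.446 * η)) * 0.53 + C / B * (-(0.15 * Q) * Jp M η) := by
    have h16 : (C:ℝ) / B = 1.6 := by unfold B C; norm_num
    rw [h16]
    unfold Q
    nlinarith [hJ]
  have hden : (0:ℝ) < B + C := by unfold B C; norm_num
  unfold hp
  exact div_pos hnum hden

lemma hpp_neg {M : ℝ} (hM : 10 < M) {η : ℝ} (h0 : 0.5 < η) (h1 : η < 1) : hpp M η < 0 := by
  have hM0 : (0:ℝ) < M := by linarith
  have hη0 : (0:ℝ) ≤ η := by norm_num at h0; linarith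
  have hK0ub : K0f M η ≤ 0.1 := by
    have ha := G0_le M (by norm_num at h1 ⊢; linarith : (0:ℝ) ≤ 1 - η)
    have hb := G0_ge hM hη0
    have hMinv : 1 / M ≤ 1 / 10 := one_div_le_one_div_of_le (by norm_num) hM.le
    unfold K0f
    rw [G0_neg]
    norm_num at h0
    linarith
  have hT1 : 0 ≤ Real.tanh (M * (1 - η)) :=
    tanh_nonneg (mul_nonneg hM0.le (by norm_num at h1 ⊢; linarith))
  have hS1 : 0 ≤ M * (1 / Real.cosh (M * (1 - η)) ^ 2) := by positivity
  have hS0 : M * (1 / Real.cosh (M * η) ^ 2) ≤ 1 / 500 := by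
    have h2 := sech_le (mul_nonneg hM0.le hη0)
    have h3 : Real.exp (-(2 * (M * η))) ≤ Real.exp (-M) := by
      apply Real.exp_le_exp.mpr
      norm_num at h0
      nlinarith [mul_nonneg hM0.le (by linarith : (0:ℝ) ≤ 2 * η - 1)]
    have h4 := M_exp_le hM
    calc M * (1 / Real.cosh (M * η) ^ 2) ≤ M * (4 * Real.exp (-(2 * (M * η)))) :=
          mul_le_mul_of_nonneg_left h2 hM0.le
    _ ≤ M * (4 * Real.exp (-M)) := by nlinarith [Real.exp_pos (-(2 * (M * η)))]
    _ = 4 * (M * Real.exp (-M)) := by ring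
    _ ≤ 1 / 500 := by linarith
  have hJpp : -(0.15:ℝ) ≤ Jpp M η := by
    unfold Jpp
    nlinarith [hT1, hS1, hS0, hK0ub]
  have hnum : Q * (-1.446) * 0.53 + C / B * (-(0.15 * Q) * Jpp M η) < 0 := by
    have h16 : (C:ℝ) / B = 1.6 := by unfold B C; norm_num
    rw [h16]
    unfold Q
    nlinarith [hJpp]
  have hden : (0:ℝ) < B + C := by unfold B C; norm_num
  unfold hpp
  exact div_neg_of_neg_of_pos hnum hden

/-! ### Values at 0, 1/2, 1 -/

lemma Jfun_zero_ge {M : ℝ} (hM : 10 < M) : 0.87 ≤ Jfun M 0 := by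
  have h1 : K0f M 0 = G0 M 1 := by simp [K0f, G0_zero]
  have h2 : K2f M 0 = G2 M 1 := by simp [K2f, G2_zero]
  have hs0 : s 0 = 1.241 := by unfold s; norm_num
  have hg0 := G0_ge hM (by norm_num : (0:ℝ) ≤ 1)
  have hg2 := G2_le M (by norm_num : (0:ℝ) ≤ 1)
  have hMinv : 1 / M ≤ 1 / 10 := one_div_le_one_div_of_le (by norm_num) hM.le
  unfold Jfun
  rw [h1, h2, hs0]
  nlinarith [hg0, hg2]

lemma Jfun_half_le {M : ℝ} (hM : 10 < M) : Jfun M 0.5 ≤ 0 := by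
  have h0 : K0f M 0.5 = 0 := by
    unfold K0f; rw [G0_neg, show (1:ℝ) - 0.5 = 0.5 by norm_num]; ring
  have h2 : K2f M 0.5 = 0 := by
    unfold K2f; rw [G2_neg, show (1:ℝ) - 0.5 = 0.5 by norm_num]; ring
  have h1 : K1f M 0.5 = 2 * G1 M 0.5 := by
    unfold K1f; rw [G1_neg, show (1:ℝ) - 0.5 = 0.5 by norm_num]; ring
  have hg := G1_nonneg M (by linarith) (by norm_num : (0:ℝ) ≤ 0.5)
  unfold Jfun
  rw [h0, h1, h2]
  nlinarith [hg]

lemma Jfun_one_ge {M : ℝ} (hM : 10 < M) : -1.03 ≤ Jfun M 1 := by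
  have h0 : K0f M 1 = -G0 M 1 := by
    unfold K0f; rw [G0_neg]; simp [G0_zero]
  have h1 : K1f M 1 = G1 M 1 := by
    unfold K1f; rw [G1_neg]; simp [G1_zero]
  have h2 : K2f M 1 = -G2 M 1 := by
    unfold K2f; rw [G2_neg]; simp [G2_zero]
  have hs1 : s 1 = 0.518 := by unfold s; norm_num
  have hg0 := G0_le M (by norm_num : (0:ℝ) ≤ 1)
  have hg1 := G1_le M (by norm_num : (0:ℝ) ≤ 1)
  have hg2 := G2_ge hM (by norm_num : (0:ℝ) ≤ 1) le_rfl
  unfold Jfun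
  rw [h0, h1, h2, hs1]
  nlinarith [hg0, hg1, hg2]

lemma hfun_zero_neg {M : ℝ} (hM : 10 < M) : hfun M 0 < 0 := by
  have hJ := Jfun_zero_ge hM
  have hs0 : s 0 = 1.241 := by unfold s; norm_num
  have h16 : (C:ℝ) / B = 1.6 := by unfold B C; norm_num
  unfold hfun
  rw [hs0, h16]
  unfold Q A B C Tc
  rw [div_eq_mul_inv, show ((1.9:ℝ) + 3.04)⁻¹ = 50 / 247 from by norm_num]
  nlinarith [hJ]

lemma hfun_half_pos {M : ℝ} (hM : 10 < M) : 0 < hfun M 0.5 := by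
  have hJ := Jfun_half_le hM
  have hs : s 0.5 = 1.06025 := by unfold s; norm_num
  have h16 : (C:ℝ) / B = 1.6 := by unfold B C; norm_num
  unfold hfun
  rw [hs, h16]
  unfold Q A B C Tc
  rw [div_eq_mul_inv, show ((1.9:ℝ) + 3.04)⁻¹ = 50 / 247 from by norm_num]
  nlinarith [hJ]

lemma hfun_one_neg {M : ℝ} (hM : 10 < M) : hfun M 1 < 0 := by
  have hJ := Jfun_one_ge hM
  have hs : s 1 = 0.518 := by unfold s; norm_num
  have h16 : (C:ℝ) / B = 1.6 := by unfold B C; norm_num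
  unfold hfun
  rw [hs, h16]
  unfold Q A B C Tc
  rw [div_eq_mul_inv, show ((1.9:ℝ) + 3.04)⁻¹ = 50 / 247 from by norm_num]
  nlinarith [hJ]

/-! ### Concavity helpers -/

lemma strictConcave_pos {f : ℝ → ℝ} (hf : StrictConcaveOn ℝ (Set.Icc (0.5:ℝ) 1) f)
    {a b x : ℝ} (ha : a ∈ Set.Icc (0.5:ℝ) 1) (hb : b ∈ Set.Icc (0.5:ℝ) 1)
    (hab : a < b) (hx : x ∈ Set.Ioo a b) (hfa : 0 < f a) (hfb : 0 ≤ f b) : 0 < f x := by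
  rw [← openSegment_eq_Ioo hab] at hx
  obtain ⟨t, u, ht, hu, htu, hc⟩ := hx
  have h := hf.2 ha hb hab.ne ht hu htu
  rw [hc] at h
  simp only [smul_eq_mul] at h
  nlinarith [mul_pos ht hfa, mul_nonneg hu.le hfb]

lemma strictConcave_neg {f : ℝ → ℝ} (hf : StrictConcaveOn ℝ (Set.Icc (0.5:ℝ) 1) f)
    {a m x : ℝ} (ha : a ∈ Set.Icc (0.5:ℝ) 1) (hx : x ∈ Set.Icc (0.5:ℝ) 1)
    (hm : m ∈ Set.Ioo a x) (hfa : 0 < f a) (hfm : f m = 0) : f x < 0 := by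
  have hax : a < x := lt_trans hm.1 hm.2
  rw [← openSegment_eq_Ioo hax] at hm
  obtain ⟨t, u, ht, hu, htu, hc⟩ := hm
  have h := hf.2 ha hx hax.ne ht hu htu
  rw [hc, hfm] at h
  simp only [smul_eq_mul] at h
  nlinarith [mul_pos ht hfa, hu]

/-- For M > 10 the iceline-temperature function h(η) = T*(η)(η) - T_c has exactly two
roots in the unit interval, positive strictly between them and negative outside. -/
theorem iceline_temperature_two_roots (M : ℝ) (hM : 10 < M) :
    ∃ η₁ η₂ : ℝ, 0 < η₁ ∧ η₁ < η₂ ∧ η₂ < 1 ∧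
      Tstar M η₁ η₁ - Tc = 0 ∧ Tstar M η₂ η₂ - Tc = 0 ∧
      (∀ η : ℝ, η₁ < η → η < η₂ → 0 < Tstar M η η - Tc) ∧
      (∀ η : ℝ, (0 ≤ η ∧ η < η₁) ∨ (η₂ < η ∧ η ≤ 1) → Tstar M η η - Tc < 0) := by
  have hcont := hfun_cont M
  have h0neg := hfun_zero_neg hM
  have hhalf := hfun_half_pos hM
  have h1neg := hfun_one_neg hM
  have hmono : StrictMonoOn (hfun M) (Set.Icc 0 0.51) := by
    apply strictMonoOn_of_deriv_pos (convex_Icc _ _) hcont.continuousOn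
    intro x hx
    rw [interior_Icc] at hx
    rw [deriv_hfun]
    exact hp_pos hM hx.1 hx.2
  have hconc : StrictConcaveOn ℝ (Set.Icc (0.5:ℝ) 1) (hfun M) := by
    apply strictConcaveOn_of_deriv2_neg (convex_Icc _ _) hcont.continuousOn
    intro x hx
    rw [interior_Icc] at hx
    have h2 : deriv^[2] (hfun M) x = hpp M x := by
      show deriv (deriv (hfun M)) x = hpp M x
      rw [deriv_hfun]
      exact (hasDerivAt_hp M x).deriv
    rw [h2]
    exact hpp_neg hM hx.1 hx.2
  have h051pos : 0 < hfun M 0.51 := by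
    have := hmono (by norm_num : (0.5:ℝ) ∈ Set.Icc (0:ℝ) 0.51)
      (by norm_num : (0.51:ℝ) ∈ Set.Icc (0:ℝ) 0.51) (by norm_num)
    linarith
  obtain ⟨η₁, hη₁mem, hη₁⟩ : ∃ x ∈ Set.Ioo (0:ℝ) 0.51, hfun M x = 0 := by
    have hsub := intermediate_value_Ioo (by norm_num : (0:ℝ) ≤ 0.51) hcont.continuousOn
    obtain ⟨x, hx, hfx⟩ := hsub (⟨h0neg, h051pos⟩ : (0:ℝ) ∈ Set.Ioo (hfun M 0) (hfun M 0.51))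
    exact ⟨x, hx, hfx⟩
  obtain ⟨η₂, hη₂mem, hη₂⟩ : ∃ x ∈ Set.Ioo (0.51:ℝ) 1, hfun M x = 0 := by
    have hsub := intermediate_value_Ioo' (by norm_num : (0.51:ℝ) ≤ 1) hcont.continuousOn
    obtain ⟨x, hx, hfx⟩ := hsub (⟨h1neg, h051pos⟩ : (0:ℝ) ∈ Set.Ioo (hfun M 1) (hfun M 0.51))
    exact ⟨x, hx, hfx⟩
  have hη₁0 := hη₁mem.1
  have hη₁51 := hη₁mem.2
  have hη₂51 := hη₂mem.1
  have hη₂1 := hη₂mem.2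
  have hmem051 : (0.51:ℝ) ∈ Set.Icc (0.5:ℝ) 1 := by norm_num
  have hη₂Icc : η₂ ∈ Set.Icc (0.5:ℝ) 1 := ⟨by norm_num at hη₂51 ⊢; linarith, hη₂1.le⟩
  refine ⟨η₁, η₂, hη₁0, by linarith, hη₂1, ?_, ?_, ?_, ?_⟩
  · rw [hfun_eq M hη₁0.le (by norm_num at hη₁51 ⊢; linarith)]
    exact hη₁
  · rw [hfun_eq M (by norm_num at hη₂51 ⊢; linarith) hη₂1.le]
    exact hη₂
  · intro η hl hr
    have hη0 : 0 < η := lt_trans hη₁0 hl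
    have hη1 : η < 1 := lt_trans hr hη₂1
    rw [hfun_eq M hη0.le hη1.le]
    rcases le_or_gt η 0.51 with hc | hc
    · have h := hmono ⟨hη₁0.le, hη₁51.le⟩ ⟨hη0.le, hc⟩ hl
      rw [hη₁] at h
      exact h
    · exact strictConcave_pos hconc hmem051 hη₂Icc hη₂51 ⟨hc, hr⟩ h051pos (le_of_eq hη₂.symm)
  · intro η hcase
    rcases hcase with ⟨hge, hlt⟩ | ⟨hgt, hle⟩
    · have hlt51 : η < 0.51 := lt_of_lt_of_le hlt hη₁51.le
      rw [hfun_eq M hge (by norm_num at hlt51 ⊢; linarith)]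
      have h := hmono ⟨hge, hlt51.le⟩ ⟨hη₁0.le, hη₁51.le⟩ hlt
      rw [hη₁] at h
      exact h
    · have hη05 : (0.5:ℝ) ≤ η := by norm_num at hη₂51 ⊢; linarith
      rw [hfun_eq M (by linarith) hle]
      exact strictConcave_neg hconc hmem051 ⟨hη05, hle⟩ ⟨hη₂51, hgt⟩ h051pos hη₂
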